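/- Let v_1, …, v_n be the vertex ordering in a 1-queue layout of a graph H, and let B_1, …, B_n be pairwise disjoint sets of vertices each of size at most ℓ. Let G be the graph with vertex set B_1 ∪ ⋯ ∪ B_n, where for each edge v_i v_j of H there is an edge between every vertex of B_i and every vertex of B_j. Then the vertex ordering of G obtained from v_1, …, v_n by replacing each v_i by the block B_i (ordered arbitrarily) admits an ℓ-queue layout of G. -/

import Mathlib

/-!
Common definitions for formalizing "Planar Graphs have Bounded Queue-Number"
(Dujmović, Joret, Micek, Morin, Ueckerdt, Wood).

All graphs are finite simple graphs (`SimpleGraph V` with `[Fintype V]`).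
-/

open Function

namespace QueuePaper

/-! ### Queue layouts -/

/-- Given a vertex ordering of `G` (an injection `f : V → ℕ`), this says the edges of `G`
can be partitioned into `k` queues with respect to this ordering, i.e. there is an
assignment `q` of edges to `{0, …, k-1}` such that no two edges in the same class are
nested. (Edges `vw` and `xy` are nested when `f v < f x < f y < f w`.) -/
def OrderingHasQueues {V : Type*} (G : SimpleGraph V) (f : V → ℕ) (k : ℕ) : Prop :=
  ∃ q : Sym2 V → ℕ,
    (∀ ⦃v w : V⦄, G.Adj v w → q s(v, w) < k) ∧
    ∀ ⦃v w x y : V⦄, G.Adj v w → G.Adj x y → q s(v, w) = q s(x, y) →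
      ¬(f v < f x ∧ f x < f y ∧ f y < f w)

/-- `G` has a `k`-queue layout: a linear ordering of the vertices together with a
partition of the edges into `k` queues. Equivalently, the queue-number of `G` is at
most `k`. -/
def HasQueueLayout {V : Type*} (G : SimpleGraph V) (k : ℕ) : Prop :=
  ∃ f : V → ℕ, Function.Injective f ∧ OrderingHasQueues G f k

/-! ### Layerings and partitions -/

/-- A layering of `G`, presented as the function sending each vertex to the index of its
layer: the endpoints of every edge lie in the same or in consecutive layers. -/
def IsLayering {V : Type*} (G : SimpleGraph V) (L : V → ℕ) : Prop :=
  ∀ ⦃v w : V⦄, G.Adj v w → L v ≤ L w + 1 ∧ L w ≤ L v + 1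

/-- A BFS layering of `G`: a root is chosen in each connected component and each vertex is
assigned the distance to the root of its component. -/
def IsBFSLayering {V : Type*} (G : SimpleGraph V) (L : V → ℕ) : Prop :=
  ∃ root : V → V,
    (∀ v, G.Reachable v (root v)) ∧
    (∀ ⦃v w : V⦄, G.Reachable v w → root v = root w) ∧
    ∀ v, L v = G.dist (root v) v

/-- An `H`-partition of `G`, presented as the function `P` sending each vertex of `G` to
the index (vertex of `H`) of its part: parts are non-empty (`P` is surjective) and for
every edge `vw` of `G`, either `v, w` lie in the same part or the parts of `v` and `w`
are adjacent in `H`. -/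
def IsHPartition {V X : Type*} (G : SimpleGraph V) (H : SimpleGraph X) (P : V → X) : Prop :=
  Function.Surjective P ∧ ∀ ⦃v w : V⦄, G.Adj v w → P v = P w ∨ H.Adj (P v) (P w)

/-- The partition (given by the fibres of) `P` has layered width at most `ℓ` with respect
to the layering `L`: every part has at most `ℓ` vertices in each layer. -/
def LayeredWidthLE {V X : Type*} (P : V → X) (L : V → ℕ) (ℓ : ℕ) : Prop :=
  ∀ (x : X) (i : ℕ), {v : V | P v = x ∧ L v = i}.ncard ≤ ℓ

/-- The quotient graph `G/P` of a partition of `G` given by the fibres of a surjection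
`P : V → X`: distinct parts are adjacent iff some vertex of one is adjacent in `G` to some
vertex of the other. -/
def quotientGraph {V X : Type*} (G : SimpleGraph V) (P : V → X) : SimpleGraph X where
  Adj x y := x ≠ y ∧ ∃ v w, G.Adj v w ∧ P v = x ∧ P w = y
  symm := by
    constructor
    rintro x y ⟨hxy, v, w, hvw, hv, hw⟩
    exact ⟨Ne.symm hxy, w, v, hvw.symm, hw, hv⟩
  loopless := by constructor; rintro x ⟨h, -⟩; exact h rfl

/-! ### Tree-decompositions and treewidth -/

/-- `(T, B)` is a tree-decomposition of `G`: `T` is a tree, for each vertex `v` of `G` the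
set of nodes of `T` whose bag contains `v` induces a non-empty connected subgraph
(subtree) of `T`, and each edge of `G` has both endpoints in some bag. -/
def IsTreeDecomp {V ι : Type*} (G : SimpleGraph V) (T : SimpleGraph ι) (B : ι → Set V) :
    Prop :=
  T.IsTree ∧
  (∀ v : V, (T.induce {x : ι | v ∈ B x}).Connected) ∧
  (∀ ⦃v w : V⦄, G.Adj v w → ∃ x, v ∈ B x ∧ w ∈ B x)

/-- `G` has treewidth at most `k`: it has a tree-decomposition with all bags of size at
most `k + 1`. -/
def TreewidthLE {V : Type*} (G : SimpleGraph V) (k : ℕ) : Prop :=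
  ∃ (ι : Type) (T : SimpleGraph ι) (B : ι → Set V),
    IsTreeDecomp G T B ∧ ∀ x, (B x).ncard ≤ k + 1

/-- `G` has layered treewidth at most `k`: it has a tree-decomposition and a layering such
that every bag has at most `k` vertices in each layer. -/
def LayeredTreewidthLE {V : Type*} (G : SimpleGraph V) (k : ℕ) : Prop :=
  ∃ (ι : Type) (T : SimpleGraph ι) (B : ι → Set V) (L : V → ℕ),
    IsTreeDecomp G T B ∧ IsLayering G L ∧
    ∀ (x : ι) (i : ℕ), {v : V | v ∈ B x ∧ L v = i}.ncard ≤ k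

/-! ### Combinatorial embeddings, Euler genus, planarity

Embeddings of graphs in surfaces are formalized combinatorially, via embedding schemes
(Heffter–Edmonds–Ringel): a rotation system (for each vertex, a cyclic ordering of the
darts leaving it) together with a signature on the edges. Faces are recovered as the
orbits of the face-tracing permutation on signed darts; each face corresponds to exactly
two orbits. For a connected graph, Euler's formula `n - m + f = 2 - g` determines the
Euler genus `g` of the embedding, and the Euler genus of a graph is the minimum over all
embedding schemes; a (possibly disconnected) graph embeds in a surface of Euler genus `g`
iff each of its components does. -/

/-- The face-tracing step of the embedding scheme `(ρ, σ)` on signed darts: having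
traversed dart `d` with current sign `s`, the sign becomes `s' = s * σ(d)` and the next
dart is obtained from the reversal of `d` by applying the rotation at its tail, forwards
or backwards according to `s'`. -/
def faceStep {V : Type*} (G : SimpleGraph V) (ρ : Equiv.Perm G.Dart) (σ : Sym2 V → Bool)
    (p : G.Dart × Bool) : G.Dart × Bool :=
  ((if (p.2 == σ p.1.edge) then ρ p.1.symm else ρ.symm p.1.symm), p.2 == σ p.1.edge)

/-- `ρ` is a rotation system on `G`: a permutation of the darts preserving tails and
acting as a single cycle on the darts at each vertex (a cyclic ordering of the darts
leaving each vertex). -/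
def IsRotation {V : Type*} (G : SimpleGraph V) (ρ : Equiv.Perm G.Dart) : Prop :=
  (∀ d : G.Dart, (ρ d).fst = d.fst) ∧
  (∀ d e : G.Dart, d.fst = e.fst → ∃ n : ℕ, (⇑ρ)^[n] d = e)

/-- The embedding scheme `(ρ, σ)` of `G` has Euler genus at most `g`: each connected
component `C` (containing at least one edge) satisfies Euler's inequality
`2 - (n_C - m_C + f_C) ≤ g`, written below with the number of darts of `C`
(which is `2 m_C`) and the number of orbits on signed darts of the face-tracing
permutation restricted to `C` (which is `2 f_C`). -/
def SchemeGenusLE {V : Type*} (G : SimpleGraph V) (ρ : Equiv.Perm G.Dart)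
    (σ : Sym2 V → Bool) (g : ℕ) : Prop :=
  ∀ C : G.ConnectedComponent,
    (∃ d : G.Dart, G.connectedComponentMk d.fst = C) →
    4 + Nat.card {d : G.Dart // G.connectedComponentMk d.fst = C}
      ≤ 2 * g + 2 * Nat.card {v : V // G.connectedComponentMk v = C}
        + Nat.card (Quot (fun a b : {p : G.Dart × Bool // G.connectedComponentMk p.1.fst = C} =>
            faceStep G ρ σ a.val = b.val))

/-- `G` has Euler genus at most `g`: it embeds in a surface of Euler genus at most `g`,
i.e. it has an embedding scheme of Euler genus at most `g`. -/
def EulerGenusLE {V : Type*} (G : SimpleGraph V) (g : ℕ) : Prop :=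
  ∃ (ρ : Equiv.Perm G.Dart) (σ : Sym2 V → Bool), IsRotation G ρ ∧ SchemeGenusLE G ρ σ g

/-- `G` is planar: it embeds in the sphere (Euler genus 0). -/
def IsPlanar {V : Type*} (G : SimpleGraph V) : Prop := EulerGenusLE G 0

/-- `G` is apex: deleting at most one vertex makes it planar. -/
def IsApex {V : Type*} (G : SimpleGraph V) : Prop :=
  ∃ S : Set V, S.ncard ≤ 1 ∧ IsPlanar (G.induce Sᶜ)

/-- `G` together with one new dominant (apex) vertex. -/
def addApex {V : Type*} (G : SimpleGraph V) : SimpleGraph (Option V) where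
  Adj a b := (a = none ∧ ∃ w, b = some w) ∨ (b = none ∧ ∃ v, a = some v) ∨
    (∃ v w, a = some v ∧ b = some w ∧ G.Adj v w)
  symm := by
    constructor
    rintro a b (⟨rfl, w, rfl⟩ | ⟨rfl, v, rfl⟩ | ⟨v, w, rfl, rfl, h⟩)
    · exact Or.inr (Or.inl ⟨rfl, w, rfl⟩)
    · exact Or.inl ⟨rfl, v, rfl⟩
    · exact Or.inr (Or.inr ⟨w, v, rfl, rfl, h.symm⟩)
  loopless := by
    constructor
    rintro a (⟨rfl, w, h⟩ | ⟨rfl, v, h⟩ | ⟨v, w, rfl, h2, h⟩)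
    · exact Option.some_ne_none _ h.symm
    · exact Option.some_ne_none _ h.symm
    · obtain rfl : v = w := by injection h2
      exact G.loopless.irrefl v h

/-- `G` is outerplanar: it has a planar embedding with all vertices on the outer face;
equivalently (and this is the formal definition used here), adding one new vertex
adjacent to all vertices of `G` yields a planar graph. -/
def IsOuterplanar {V : Type*} (G : SimpleGraph V) : Prop := IsPlanar (addApex G)

/-- `G` is a planar triangulation: a connected graph with a planar embedding scheme
(Euler's formula for genus 0 holds, written with darts and face-tracing orbits as in
`SchemeGenusLE`) in which every facial walk has length 3, i.e. every face (including the
outer face) is a triangle. -/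
def IsPlanarTriangulation {V : Type*} (G : SimpleGraph V) : Prop :=
  G.Connected ∧
  ∃ (ρ : Equiv.Perm G.Dart) (σ : Sym2 V → Bool),
    IsRotation G ρ ∧
    (∀ p : G.Dart × Bool, (faceStep G ρ σ)^[3] p = p) ∧
    4 + Nat.card G.Dart
      = 2 * Nat.card V + Nat.card (Quot (fun a b : G.Dart × Bool => faceStep G ρ σ a = b))

/-! ### Vertical paths and tripods -/

/-- `S` is (the vertex set of) a vertical path in the tree `T` rooted at `r`: a non-empty
path in `T` whose vertices have pairwise distinct distances from the root (so distances
along the path are `d+1, d+2, …, d+p` for some `d`). -/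
def IsVerticalPath {V : Type*} (T : SimpleGraph V) (r : V) (S : Set V) : Prop :=
  S.Nonempty ∧ (T.induce S).Connected ∧ Set.InjOn (T.dist r) S

/-- `S` is (the vertex set of) a tripod in the spanning tree `T` (rooted at `r`) of `G`:
the union of up to three pairwise disjoint vertical paths in `T` whose lower endpoints
(the endpoints farthest from the root) form a clique in `G`. -/
def IsTripod {V : Type*} (G T : SimpleGraph V) (r : V) (S : Set V) : Prop :=
  ∃ P : Fin 3 → Set V,
    S = P 0 ∪ P 1 ∪ P 2 ∧
    (∀ i j, i ≠ j → Disjoint (P i) (P j)) ∧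
    (∀ i, P i = ∅ ∨ IsVerticalPath T r (P i)) ∧
    ∃ low : Fin 3 → V,
      (∀ i, (P i).Nonempty → low i ∈ P i ∧ ∀ x ∈ P i, T.dist r x ≤ T.dist r (low i)) ∧
      ∀ i j, i ≠ j → (P i).Nonempty → (P j).Nonempty → G.Adj (low i) (low j)

/-! ### Minors -/

/-- `H` is a minor of `G`: there is a family of non-empty, connected, pairwise disjoint
branch sets in `G`, indexed by the vertices of `H`, with an edge of `G` between the branch
sets corresponding to each edge of `H`. -/
def IsMinor {α β : Type*} (H : SimpleGraph α) (G : SimpleGraph β) : Prop :=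
  ∃ B : α → Set β,
    (∀ x, (B x).Nonempty) ∧
    (∀ x, (G.induce (B x)).Connected) ∧
    (∀ x y, x ≠ y → Disjoint (B x) (B y)) ∧
    ∀ ⦃x y⦄, H.Adj x y → ∃ u ∈ B x, ∃ v ∈ B y, G.Adj u v

/-! ### Strong products and subgraph embeddings -/

/-- The strong product `A ⊠ B`. -/
def strongProd {α β : Type*} (A : SimpleGraph α) (B : SimpleGraph β) :
    SimpleGraph (α × β) where
  Adj p q := p ≠ q ∧ (p.1 = q.1 ∨ A.Adj p.1 q.1) ∧ (p.2 = q.2 ∨ B.Adj p.2 q.2)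
  symm := by
    constructor
    rintro p q ⟨hne, h1, h2⟩
    exact ⟨hne.symm, Or.imp (fun h => h.symm) (fun h => h.symm) h1,
      Or.imp (fun h => h.symm) (fun h => h.symm) h2⟩
  loopless := ⟨fun p h => h.1 rfl⟩

/-- `G` is (isomorphic to) a subgraph of `G'`. -/
def EmbedsIn {α β : Type*} (G : SimpleGraph α) (G' : SimpleGraph β) : Prop :=
  ∃ f : α → β, Function.Injective f ∧ ∀ ⦃v w⦄, G.Adj v w → G'.Adj (f v) (f w)

end QueuePaper


namespace BlowupAux

variable {α : Type*}

/-- Fuel-based nesting depth: `depthF E lo hi n e` is (for sufficient fuel `n`) the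
length of the longest chain of elements of `E` strictly nested inside `e`. -/
noncomputable def depthF (E : Finset α) (lo hi : α → ℕ) : ℕ → α → ℕ
  | 0, _ => 0
  | n+1, e =>
      (E.filter fun e' => lo e < lo e' ∧ hi e' < hi e).sup
        (fun e' => depthF E lo hi n e' + 1)

noncomputable def depth (E : Finset α) (lo hi : α → ℕ) (e : α) : ℕ :=
  depthF E lo hi (hi e - lo e) e

lemma depthF_stab (E : Finset α) (lo hi : α → ℕ) (hle : ∀ a ∈ E, lo a ≤ hi a) :
    ∀ k e n, hi e - lo e ≤ k → hi e - lo e ≤ n →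
      depthF E lo hi n e = depth E lo hi e := by
  intro k
  induction k using Nat.strong_induction_on with
  | _ k IH =>
    intro e n hk hn
    unfold depth
    cases n with
    | zero =>
      have h0 : hi e - lo e = 0 := Nat.le_zero.mp hn
      rw [h0]
    | succ n =>
      cases hwe : hi e - lo e with
      | zero =>
        simp only [depthF]
        rw [Finset.filter_false_of_mem, Finset.sup_empty]
        · rfl
        · intro a ha h
          have := hle a ha
          omega
      | succ m =>
        rw [depthF, depthF]
        apply Finset.sup_congr rfl
        intro b hb
        rw [Finset.mem_filter] at hb
        obtain ⟨hbE, h1, h2⟩ := hb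
        have hble := hle b hbE
        have hmk : m < k := by omega
        have e1 := IH m hmk b n (by omega) (by omega)
        have e2 := IH m hmk b m (by omega) (by omega)
        rw [e1, e2]

lemma depth_lt (E : Finset α) (lo hi : α → ℕ) (hle : ∀ a ∈ E, lo a ≤ hi a)
    {b e : α} (hb : b ∈ E) (h1 : lo e < lo b) (h2 : hi b < hi e) :
    depth E lo hi b < depth E lo hi e := by
  have hble := hle b hb
  obtain ⟨n, hn⟩ : ∃ n, hi e - lo e = n + 1 := ⟨hi e - lo e - 1, by omega⟩
  have : depth E lo hi e = depthF E lo hi (n+1) e := by rw [depth, hn]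
  rw [this, depthF]
  have hmem : b ∈ E.filter fun e' => lo e < lo e' ∧ hi e' < hi e :=
    Finset.mem_filter.mpr ⟨hb, h1, h2⟩
  have hsup : depthF E lo hi n b + 1 ≤
      (E.filter fun e' => lo e < lo e' ∧ hi e' < hi e).sup
        (fun e' => depthF E lo hi n e' + 1) :=
    Finset.le_sup (f := fun e' => depthF E lo hi n e' + 1) hmem
  have hstab := depthF_stab E lo hi hle (hi b - lo b) b n le_rfl (by omega)
  omega

lemma exists_of_depth (E : Finset α) (lo hi : α → ℕ) (hle : ∀ a ∈ E, lo a ≤ hi a)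
    {e : α} {m : ℕ} (h : m + 1 ≤ depth E lo hi e) :
    ∃ b ∈ E, lo e < lo b ∧ hi b < hi e ∧ m ≤ depth E lo hi b := by
  obtain ⟨n, hn⟩ : ∃ n, hi e - lo e = n + 1 := by
    rcases Nat.eq_zero_or_pos (hi e - lo e) with h0 | h0
    · rw [depth, h0] at h; simp [depthF] at h
    · exact ⟨hi e - lo e - 1, by omega⟩
  rw [depth, hn, depthF] at h
  rw [Finset.le_sup_iff (by omega : (0:ℕ) < m + 1)] at h
  obtain ⟨b, hb, hmb⟩ := h
  rw [Finset.mem_filter] at hb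
  obtain ⟨hbE, h1, h2⟩ := hb
  have hble := hle b hbE
  have hstab := depthF_stab E lo hi hle (hi b - lo b) b n le_rfl (by omega)
  exact ⟨b, hbE, h1, h2, by omega⟩

lemma chain (E : Finset α) (lo hi : α → ℕ) (hle : ∀ a ∈ E, lo a ≤ hi a) :
    ∀ (m : ℕ) (e : α), e ∈ E → m ≤ depth E lo hi e →
      ∃ c : ℕ → α, c 0 = e ∧ (∀ t ≤ m, c t ∈ E) ∧
        ∀ s t, s < t → t ≤ m → lo (c s) < lo (c t) ∧ hi (c t) < hi (c s) := by
  intro m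
  induction m with
  | zero =>
    intro e he _
    exact ⟨fun _ => e, rfl, fun t _ => he, fun s t hst ht => by omega⟩
  | succ m IH =>
    intro e he h
    obtain ⟨b, hbE, h1, h2, hm⟩ := exists_of_depth E lo hi hle h
    obtain ⟨c, hc0, hcE, hcP⟩ := IH b hbE hm
    refine ⟨fun t => Nat.casesOn t e c, rfl, ?_, ?_⟩
    · intro t ht
      cases t with
      | zero => exact he
      | succ t => exact hcE t (by omega)
    · intro s t hst ht
      cases t with
      | zero => omega
      | succ t =>
        cases s with
        | zero =>
          show lo e < lo (c t) ∧ hi (c t) < hi e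
          cases t with
          | zero => rw [hc0]; exact ⟨h1, h2⟩
          | succ u =>
            have := hcP 0 (u+1) (by omega) (by omega)
            rw [hc0] at this
            exact ⟨h1.trans this.1, this.2.trans h2⟩
        | succ s => exact hcP s t (by omega) (by omega)

end BlowupAux

open QueuePaper in
/-- The blow-up lemma for queue layouts: let `f` be the vertex ordering of a 1-queue
layout of `H` (no two edges of `H` are nested in `f`). Let the vertices of `G` be
grouped into pairwise disjoint blocks indexed by the vertices of `H` (vertex `v` of `G`
lies in block `β v`), each block of size at most `ℓ`, and let the edges of `G` be exactly
all pairs joining two blocks corresponding to an edge of `H`. Then any vertex ordering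
`g` of `G` obtained from `f` by replacing each vertex of `H` by its block (ordered
arbitrarily) admits an `ℓ`-queue layout of `G`. -/
theorem blowup_queue {X V : Type} [Fintype X] [Fintype V]
    (H : SimpleGraph X) (f : X → ℕ) (hf : Function.Injective f)
    (hH1 : ∀ ⦃v w x y : X⦄, H.Adj v w → H.Adj x y →
      ¬(f v < f x ∧ f x < f y ∧ f y < f w))
    (ℓ : ℕ) (β : V → X) (hβ : ∀ x : X, {v : V | β v = x}.ncard ≤ ℓ)
    (G : SimpleGraph V) (hG : ∀ v w : V, G.Adj v w ↔ H.Adj (β v) (β w))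
    (g : V → ℕ) (hg : Function.Injective g)
    (hcompat : ∀ v w : V, β v ≠ β w → (g v < g w ↔ f (β v) < f (β w))) :
    OrderingHasQueues G g ℓ := by
  classical
  -- The two endpoint functions of an edge in the ordering `g`.
  set lo : Sym2 V → ℕ :=
    Sym2.lift ⟨fun a b => min (g a) (g b), fun a b => by simp [min_comm]⟩ with hlo
  set hi : Sym2 V → ℕ :=
    Sym2.lift ⟨fun a b => max (g a) (g b), fun a b => by simp [max_comm]⟩ with hhi
  set E : Finset (Sym2 V) := (Set.toFinite G.edgeSet).toFinset with hE
  have hmemE : ∀ e : Sym2 V, e ∈ E ↔ e ∈ G.edgeSet := fun e => Set.Finite.mem_toFinset _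
  have hle : ∀ a ∈ E, lo a ≤ hi a := by
    intro a _
    induction a using Sym2.ind with
    | _ x y => simp [hlo, hhi, min_le_max]
  have hlo_mk : ∀ a b : V, lo s(a, b) = min (g a) (g b) := fun a b => rfl
  have hhi_mk : ∀ a b : V, hi s(a, b) = max (g a) (g b) := fun a b => rfl
  refine ⟨BlowupAux.depth E lo hi, ?_, ?_⟩
  · -- the depth of every edge is < ℓ
    intro v w hvw
    by_contra hcon
    push_neg at hcon
    have hmem : s(v, w) ∈ E := (hmemE _).mpr (G.mem_edgeSet.mpr hvw)
    obtain ⟨c, -, hcE, hcP⟩ := BlowupAux.chain E lo hi hle ℓ s(v, w) hmem hcon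
    -- choose ordered endpoints of each edge in the chain
    have hrep : ∀ t : ℕ, ∃ p : V × V, t ≤ ℓ →
        c t = s(p.1, p.2) ∧ G.Adj p.1 p.2 ∧ g p.1 < g p.2 := by
      intro t
      by_cases ht : t ≤ ℓ
      · have hct : c t ∈ G.edgeSet := (hmemE _).mp (hcE t ht)
        obtain ⟨a, b, hab⟩ : ∃ a b, c t = s(a, b) :=
          Sym2.ind (fun a b => ⟨a, b, rfl⟩) (c t)
        have hadj : G.Adj a b := by
          rw [hab] at hct; exact G.mem_edgeSet.mp hct
        have hne : g a ≠ g b := fun h => hadj.ne (hg h)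
        rcases lt_or_gt_of_ne hne with h | h
        · exact ⟨(a, b), fun _ => ⟨hab, hadj, h⟩⟩
        · exact ⟨(b, a), fun _ => ⟨by rw [hab, Sym2.eq_swap], hadj.symm, h⟩⟩
      · exact ⟨(v, v), fun h => absurd h ht⟩
    choose P hP using hrep
    set vv : ℕ → V := fun t => (P t).1 with hvv
    set ww : ℕ → V := fun t => (P t).2 with hww
    have hlo_c : ∀ t ≤ ℓ, lo (c t) = g (vv t) := by
      intro t ht
      obtain ⟨he, -, hlt⟩ := hP t ht
      rw [he, hlo_mk]
      exact min_eq_left hlt.le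
    have hhi_c : ∀ t ≤ ℓ, hi (c t) = g (ww t) := by
      intro t ht
      obtain ⟨he, -, hlt⟩ := hP t ht
      rw [he, hhi_mk]
      exact max_eq_right hlt.le
    have hnestg : ∀ s t, s < t → t ≤ ℓ → g (vv s) < g (vv t) ∧ g (ww t) < g (ww s) := by
      intro s t hst ht
      have := hcP s t hst ht
      rwa [hlo_c s (by omega), hlo_c t ht, hhi_c s (by omega), hhi_c t ht] at this
    have hadjH : ∀ t ≤ ℓ, H.Adj (β (vv t)) (β (ww t)) :=
      fun t ht => (hG _ _).mp (hP t ht).2.1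
    have hfvw : ∀ t ≤ ℓ, f (β (vv t)) < f (β (ww t)) := by
      intro t ht
      exact (hcompat _ _ (hadjH t ht).ne).mp (hP t ht).2.2
    -- any two chain edges share the left block or the right block
    have hshare : ∀ s t, s < t → t ≤ ℓ → β (vv s) = β (vv t) ∨ β (ww s) = β (ww t) := by
      intro s t hst ht
      by_contra hc
      push_neg at hc
      obtain ⟨hL, hR⟩ := hc
      have hn := hnestg s t hst ht
      have h1 : f (β (vv s)) < f (β (vv t)) := (hcompat _ _ hL).mp hn.1
      have h2 : f (β (ww t)) < f (β (ww s)) := (hcompat _ _ (Ne.symm hR)).mp hn.2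
      have h3 : f (β (vv t)) < f (β (ww t)) := hfvw t ht
      exact hH1 (hadjH s (by omega)) (hadjH t ht) ⟨h1, h3, h2⟩
    have hshare' : ∀ s t, s ≤ ℓ → t ≤ ℓ → β (vv s) = β (vv t) ∨ β (ww s) = β (ww t) := by
      intro s t hs ht
      rcases lt_trichotomy s t with h | h | h
      · exact hshare s t h ht
      · exact Or.inl (by rw [h])
      · exact (hshare t s h hs).imp Eq.symm Eq.symm
    -- ℓ+1 distinct vertices in one block: contradiction
    have card_contra : ∀ (h : ℕ → V) (j : X), (∀ t ≤ ℓ, β (h t) = j) →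
        (∀ a b, a < b → b ≤ ℓ → h a ≠ h b) → False := by
      intro h j hj hinj
      have hinjF : Function.Injective
          (fun t : Fin (ℓ + 1) => (⟨h t, hj t (Nat.lt_succ_iff.mp t.isLt)⟩ :
            {u : V | β u = j})) := by
        intro a b hab
        simp only [Subtype.mk.injEq] at hab
        by_contra hne
        have hne' : (a : ℕ) ≠ (b : ℕ) := fun h' => hne (Fin.ext h')
        rcases lt_or_gt_of_ne hne' with h' | h'
        · exact hinj a b h' (Nat.lt_succ_iff.mp b.isLt) hab
        · exact hinj b a h' (Nat.lt_succ_iff.mp a.isLt) hab.symm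
      have hcard : ℓ + 1 ≤ {u : V | β u = j}.ncard := by
        calc ℓ + 1 = Nat.card (Fin (ℓ + 1)) := by simp
          _ ≤ Nat.card {u : V | β u = j} := Nat.card_le_card_of_injective _ hinjF
          _ = {u : V | β u = j}.ncard := (Nat.card_coe_set_eq _)
      have := hβ j
      omega
    by_cases hall : ∀ s t, s ≤ ℓ → t ≤ ℓ → β (vv s) = β (vv t)
    · refine card_contra vv (β (vv 0)) (fun t ht => hall t 0 ht (by omega)) ?_
      intro a b hab hb hEq
      have := (hnestg a b hab hb).1
      rw [hEq] at this
      exact lt_irrefl _ this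
    · push_neg at hall
      obtain ⟨s, t, hs, ht, hst⟩ := hall
      have hwst : β (ww s) = β (ww t) := (hshare' s t hs ht).resolve_left hst
      have hallw : ∀ u ≤ ℓ, β (ww u) = β (ww s) := by
        intro u hu
        rcases hshare' u s hu hs with h1 | h1
        · rcases hshare' u t hu ht with h2 | h2
          · exact absurd (h1.symm.trans h2) hst
          · exact h2.trans hwst.symm
        · exact h1
      refine card_contra ww (β (ww s)) hallw ?_
      intro a b hab hb hEq
      have := (hnestg a b hab hb).2
      rw [hEq] at this
      exact lt_irrefl _ this
  · -- no two edges of the same depth are nested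
    intro v w x y hvw hxy hq
    rintro ⟨h1, h2, h3⟩
    have hvltw : g v < g w := h1.trans (h2.trans h3)
    have hmem : s(x, y) ∈ E := (hmemE _).mpr (G.mem_edgeSet.mpr hxy)
    have hlt : BlowupAux.depth E lo hi s(x, y) < BlowupAux.depth E lo hi s(v, w) := by
      apply BlowupAux.depth_lt E lo hi hle hmem
      · rw [hlo_mk, hlo_mk, min_eq_left hvltw.le, min_eq_left h2.le]; exact h1
      · rw [hhi_mk, hhi_mk, max_eq_right hvltw.le, max_eq_right h2.le]; exact h3
    omega
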